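/- Let 0 < p ≤ 1, b > 0, and λ ∈ ℝ with b ≥ pλ. Then E^λ_{p,b}(−z) ≥ 0 for every z > 0. -/

import Mathlib

/-- The generalized Mittag-Leffler function
`E^λ_{p,b}(z) = Σ_{k=0}^∞ (λ)_k z^k / (Γ(pk+b) k!)`, where `(λ)_k` is the rising
factorial. -/
noncomputable def genMittagLeffler (p b lam z : ℝ) : ℝ :=
  ∑' k : ℕ, (ascPochhammer ℝ k).eval lam * z ^ k /
    (Real.Gamma (p * k + b) * (Nat.factorial k : ℝ))

open Real Filter Topology

namespace GMLProof


noncomputable def a (lam : ℝ) (k : ℕ) : ℝ :=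
  (ascPochhammer ℝ k).eval lam * (-1) ^ k / (Nat.factorial k : ℝ)

lemma poch_nonneg (x : ℝ) (hx : 0 ≤ x) (k : ℕ) : 0 ≤ (ascPochhammer ℝ k).eval x := by
  induction k with
  | zero => simp
  | succ n ih =>
      rw [ascPochhammer_succ_eval]
      have : (0:ℝ) ≤ x + n := by positivity
      positivity

lemma poch_abs_le (x : ℝ) (M : ℕ) (h : |x| ≤ M) (k : ℕ) :
    |(ascPochhammer ℝ k).eval x| ≤ (ascPochhammer ℝ k).eval (M : ℝ) := by
  induction k with
  | zero => simp
  | succ n ih =>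
      rw [ascPochhammer_succ_eval, ascPochhammer_succ_eval, abs_mul]
      have h1 : |x + n| ≤ (M : ℝ) + n := by
        calc |x + n| ≤ |x| + |(n:ℝ)| := abs_add_le _ _
        _ ≤ (M:ℝ) + n := by rw [Nat.abs_cast]; exact add_le_add_left h _
      have h2 : (0:ℝ) ≤ (M:ℝ) + n := by positivity
      exact mul_le_mul ih h1 (abs_nonneg _) (poch_nonneg _ (Nat.cast_nonneg M) n)

lemma pow_aux (k M : ℕ) :
    ((k : ℝ) + 1) ^ M * ((k : ℝ) + 1 + M) ≤ ((k : ℝ) + 1) * ((k : ℝ) + 2) ^ M := by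
  induction M with
  | zero => simp
  | succ M ih =>
      have hk : (0:ℝ) < (k:ℝ) + 1 := by positivity
      have h1 : ((k:ℝ) + 1) ^ (M+1) ≤ ((k:ℝ) + 1) * ((k:ℝ) + 2) ^ M := by
        rw [pow_succ]
        calc ((k:ℝ)+1)^M * ((k:ℝ)+1) ≤ ((k:ℝ)+2)^M * ((k:ℝ)+1) := by
              apply mul_le_mul_of_nonneg_right _ hk.le
              exact pow_le_pow_left₀ (by positivity) (by linarith) M
        _ = ((k:ℝ)+1) * ((k:ℝ)+2)^M := by ring
      push_cast
      calc ((k:ℝ)+1)^(M+1) * ((k:ℝ)+1+((M:ℝ)+1))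
          = ((k:ℝ)+1)*(((k:ℝ)+1)^M*((k:ℝ)+1+M)) + ((k:ℝ)+1)^(M+1) := by
            rw [pow_succ]; ring
        _ ≤ ((k:ℝ)+1)*(((k:ℝ)+1)*((k:ℝ)+2)^M) + ((k:ℝ)+1)*((k:ℝ)+2)^M :=
            add_le_add (mul_le_mul_of_nonneg_left ih hk.le) h1
        _ = ((k:ℝ)+1)*((k:ℝ)+2)^(M+1) := by rw [pow_succ]; ring

lemma poch_le (M k : ℕ) :
    (ascPochhammer ℝ k).eval (M : ℝ) ≤ (Nat.factorial k : ℝ) * ((k : ℝ) + 1) ^ M := by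
  induction k with
  | zero => simp
  | succ k ih =>
      rw [ascPochhammer_succ_eval]
      push_cast
      have h0 : (0:ℝ) ≤ (M:ℝ) + k := by positivity
      calc (ascPochhammer ℝ k).eval (M:ℝ) * ((M:ℝ) + k)
          ≤ ((Nat.factorial k : ℝ) * ((k:ℝ)+1)^M) * ((k:ℝ) + 1 + M) := by
            apply mul_le_mul ih (by linarith) h0
            positivity
        _ = (Nat.factorial k : ℝ) * (((k:ℝ)+1)^M * ((k:ℝ)+1+M)) := by ring
        _ ≤ (Nat.factorial k : ℝ) * (((k:ℝ)+1) * ((k:ℝ)+2)^M) := by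
            apply mul_le_mul_of_nonneg_left (pow_aux k M) (by positivity)
        _ = ((k:ℝ)+1) * (Nat.factorial k:ℝ) * (((k:ℝ)+1) + 1)^M := by ring
        _ = ((Nat.factorial (k+1) : ℕ):ℝ) * (((k:ℝ)+1) + 1)^M := by
            rw [Nat.factorial_succ]; push_cast; ring
  
lemma abs_a_le (lam : ℝ) (M : ℕ) (h : |lam| ≤ M) (k : ℕ) :
    |a lam k| ≤ ((k : ℝ) + 1) ^ M := by
  have hfac : (0:ℝ) < (Nat.factorial k : ℝ) := by
    exact_mod_cast Nat.factorial_pos k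
  have : |a lam k| = |(ascPochhammer ℝ k).eval lam| / (Nat.factorial k : ℝ) := by
    rw [a, abs_div, abs_mul, abs_pow, abs_neg, abs_one, one_pow, mul_one,
      abs_of_pos hfac]
  rw [this, div_le_iff₀ hfac]
  calc |(ascPochhammer ℝ k).eval lam| ≤ (ascPochhammer ℝ k).eval (M:ℝ) :=
        poch_abs_le lam M h k
    _ ≤ (Nat.factorial k : ℝ) * ((k:ℝ)+1)^M := poch_le M k
    _ = ((k:ℝ)+1)^M * (Nat.factorial k : ℝ) := by ring

lemma a_succ (lam : ℝ) (k : ℕ) :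
    ((k : ℝ) + 1) * a lam (k + 1) = -(lam + k) * a lam k := by
  have hfac : ((Nat.factorial k : ℝ)) ≠ 0 := by
    exact_mod_cast (Nat.factorial_pos k).ne'
  have hk1 : ((k:ℝ) + 1) ≠ 0 := by positivity
  rw [a, a, ascPochhammer_succ_eval, Nat.factorial_succ]
  push_cast
  field_simp
  ring

lemma summable_poly_geom (J : ℕ) {r : ℝ} (h0 : 0 ≤ r) (h1 : r < 1) :
    Summable (fun k : ℕ => ((k : ℝ) + 1) ^ J * r ^ k) := by
  rcases eq_or_lt_of_le h0 with h | h
  · apply summable_of_ne_finset_zero (s := {0})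
    intro k hk
    simp only [Finset.mem_singleton] at hk
    rw [← h, zero_pow hk]
    ring
  · have hg : Summable (fun n : ℕ => ((n:ℝ)) ^ J * r ^ n) := by
      apply summable_pow_mul_geometric_of_norm_lt_one
      rw [Real.norm_eq_abs, abs_of_pos h]; exact h1
    have hg1 : Summable (fun n : ℕ => ((n:ℝ)+1) ^ J * r ^ (n+1)) := by
      have := (summable_nat_add_iff 1).mpr hg
      apply this.congr
      intro n; push_cast; ring
    apply (hg1.mul_left (1/r)).congr
    intro n
    rw [pow_succ]
    field_simp



lemma Gamma_conv (x σ : ℝ) (hx : 0 < x) (h0 : 0 ≤ σ) (h1 : σ ≤ 1) :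
    Real.Gamma (x + σ) ≤ Real.Gamma x * x ^ σ := by
  have hΓx : 0 < Real.Gamma x := Real.Gamma_pos_of_pos hx
  have hx1 : (0:ℝ) < x + 1 := by linarith
  have key := Real.convexOn_log_Gamma.2 (Set.mem_Ioi.mpr hx) (Set.mem_Ioi.mpr hx1)
    (by linarith : (0:ℝ) ≤ 1 - σ) h0 (by ring)
  simp only [smul_eq_mul, Function.comp_apply] at key
  have harg : (1 - σ) * x + σ * (x + 1) = x + σ := by ring
  rw [harg, Real.Gamma_add_one hx.ne', Real.log_mul hx.ne' hΓx.ne'] at key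
  have e : (1 - σ) * Real.log (Real.Gamma x)
      + σ * (Real.log x + Real.log (Real.Gamma x))
      = Real.log (Real.Gamma x) + σ * Real.log x := by ring
  rw [e] at key
  have hΓxσ : 0 < Real.Gamma (x + σ) := Real.Gamma_pos_of_pos (by linarith)
  calc Real.Gamma (x + σ) = Real.exp (Real.log (Real.Gamma (x + σ))) :=
        (Real.exp_log hΓxσ).symm
    _ ≤ Real.exp (Real.log (Real.Gamma x) + σ * Real.log x) := Real.exp_le_exp.mpr key
    _ = Real.Gamma x * x ^ σ := by
        rw [Real.exp_add, Real.exp_log hΓx, Real.rpow_def_of_pos hx, mul_comm σ _]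

lemma Gamma_nat_lower (x : ℝ) (hx : 0 < x) (m : ℕ) :
    Real.Gamma x * x ^ (m : ℝ) ≤ Real.Gamma (x + m) := by
  rw [Real.rpow_natCast]
  induction m with
  | zero => simp
  | succ m ih =>
      have hxm : (0:ℝ) < x + m := by positivity
      have hΓ : 0 < Real.Gamma (x + m) := Real.Gamma_pos_of_pos hxm
      have e : x + ((m : ℕ) + 1 : ℕ) = (x + m) + 1 := by push_cast; ring
      rw [e, Real.Gamma_add_one hxm.ne']
      calc Real.Gamma x * x ^ (m + 1) = x * (Real.Gamma x * x ^ m) := by ring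
        _ ≤ x * Real.Gamma (x + m) := by
            exact mul_le_mul_of_nonneg_left ih hx.le
        _ ≤ (x + m) * Real.Gamma (x + m) := by
            apply mul_le_mul_of_nonneg_right _ hΓ.le
            linarith [Nat.cast_nonneg (α := ℝ) m]

lemma Gamma_shift_upper_aux : ∀ (m : ℕ) (x y : ℝ), 0 < x → 0 ≤ y → y ≤ m →
    Real.Gamma (x + y) ≤ Real.Gamma x * (x + y) ^ y := by
  intro m
  induction m with
  | zero =>
      intro x y hx hy hym
      have : y = 0 := le_antisymm (by exact_mod_cast hym) hy
      simp [this]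
  | succ m ih =>
      intro x y hx hy hym
      by_cases hy1 : y ≤ 1
      · calc Real.Gamma (x + y) ≤ Real.Gamma x * x ^ y := Gamma_conv x y hx hy hy1
          _ ≤ Real.Gamma x * (x + y) ^ y := by
              apply mul_le_mul_of_nonneg_left _ (Real.Gamma_pos_of_pos hx).le
              exact Real.rpow_le_rpow hx.le (by linarith) hy
      · push_neg at hy1
        have hy1' : (0:ℝ) ≤ y - 1 := by linarith
        have hym' : y - 1 ≤ m := by push_cast at hym ⊢; linarith
        have hxy1 : (0:ℝ) < x + (y - 1) := by linarith
        have hxy : (0:ℝ) < x + y := by linarith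
        have e : x + y = (x + (y - 1)) + 1 := by ring
        rw [e, Real.Gamma_add_one hxy1.ne']
        have h1 := ih x (y - 1) hx hy1' hym'
        calc (x + (y - 1)) * Real.Gamma (x + (y - 1))
            ≤ (x + (y - 1)) * (Real.Gamma x * (x + (y - 1)) ^ (y - 1)) :=
              mul_le_mul_of_nonneg_left h1 hxy1.le
          _ ≤ (x + y) * (Real.Gamma x * (x + y) ^ (y - 1)) := by
              apply mul_le_mul (by linarith)
                (mul_le_mul_of_nonneg_left
                  (Real.rpow_le_rpow hxy1.le (by linarith) hy1') (Real.Gamma_pos_of_pos hx).le)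
                (by positivity) (by linarith)
          _ = Real.Gamma x * ((x + y) ^ (y - 1) * (x + y)) := by ring
          _ = Real.Gamma x * (x + y) ^ y := by
              rw [← Real.rpow_add_one hxy.ne' (y - 1)]
              norm_num
          _ = Real.Gamma x * (x + (y - 1) + 1) ^ y := by ring_nf

lemma Gamma_shift_upper (x y : ℝ) (hx : 0 < x) (hy : 0 ≤ y) :
    Real.Gamma (x + y) ≤ Real.Gamma x * (x + y) ^ y :=
  Gamma_shift_upper_aux ⌈y⌉₊ x y hx hy (Nat.le_ceil y)

lemma Gamma_shift_lower (x y : ℝ) (hx : 0 < x) (hy : 0 ≤ y) :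
    Real.Gamma x * x ^ y * (x / (x + y)) ≤ Real.Gamma (x + y) := by
  set m : ℕ := ⌈y⌉₊ with hm
  have hym : y ≤ m := Nat.le_ceil y
  have hmy1 : (m:ℝ) < y + 1 := by exact_mod_cast Nat.ceil_lt_add_one hy
  have hxy : 0 < x + y := by linarith
  have hΓxy : 0 < Real.Gamma (x + y) := Real.Gamma_pos_of_pos hxy
  have key2 : Real.Gamma (x + m) ≤ Real.Gamma (x + y) * (x + y) ^ ((m:ℝ) - y) := by
    have e : x + (m:ℝ) = (x + y) + ((m:ℝ) - y) := by ring
    rw [e]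
    exact Gamma_conv (x + y) _ hxy (by linarith) (by linarith)
  have key1 := Gamma_nat_lower x hx m
  have hpow_pos : 0 < (x + y) ^ ((m:ℝ) - y) := Real.rpow_pos_of_pos hxy _
  have step2 : Real.Gamma x * x ^ (m:ℝ) / (x + y) ^ ((m:ℝ) - y) ≤ Real.Gamma (x + y) := by
    rw [div_le_iff₀ hpow_pos]
    exact le_trans key1 key2
  refine le_trans ?_ step2
  have e1 : x ^ (m:ℝ) = x ^ y * x ^ ((m:ℝ) - y) := by
    rw [← Real.rpow_add hx]; ring_nf
  rw [e1]
  have e2 : Real.Gamma x * (x ^ y * x ^ ((m:ℝ) - y)) / (x + y) ^ ((m:ℝ) - y)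
      = Real.Gamma x * x ^ y * (x / (x + y)) ^ ((m:ℝ) - y) := by
    rw [Real.div_rpow hx.le hxy.le]; ring
  rw [e2]
  apply mul_le_mul_of_nonneg_left _ (by positivity)
  have hbase1 : x / (x + y) ≤ 1 := by rw [div_le_one hxy]; linarith
  have hbase0 : 0 < x / (x + y) := by positivity
  calc x / (x + y) = (x / (x + y)) ^ (1:ℝ) := (Real.rpow_one _).symm
    _ ≤ (x / (x + y)) ^ ((m:ℝ) - y) :=
        Real.rpow_le_rpow_of_exponent_ge hbase0 hbase1 (by linarith)



noncomputable def Hf (p α δ : ℝ) : ℝ → ℝ := fun s => s ^ (-α) * (1 + s ^ p) ^ (-δ)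

def Alt : ℕ → (ℝ → ℝ) → Prop
  | 0, f => ∀ s, 1 < s → 0 ≤ f s
  | n+1, f => (∀ s, 1 < s → 0 ≤ f s) ∧
      ∃ g, (∀ s, 1 < s → HasDerivAt f (-(g s)) s) ∧ Alt n g

lemma Hf_pos (p α δ : ℝ) {s : ℝ} (hs : 0 < s) : 0 < Hf p α δ s := by
  have h1 : 0 < s ^ p := Real.rpow_pos_of_pos hs p
  have h2 : 0 < 1 + s ^ p := by linarith
  unfold Hf
  positivity

lemma hasDerivAt_Hf (p α δ : ℝ) {s : ℝ} (hs : 0 < s) :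
    HasDerivAt (Hf p α δ)
      (-(α * Hf p (α+1) (δ+1) s + (α + p*δ) * Hf p (α+1-p) (δ+1) s)) s := by
  have hsp : 0 < s ^ p := Real.rpow_pos_of_pos hs p
  have hu : (0:ℝ) < 1 + s ^ p := by linarith
  have h1 : HasDerivAt (fun t : ℝ => t ^ (-α)) (-α * s ^ (-α-1)) s := by
    simpa using (Real.hasDerivAt_rpow_const (x := s) (p := -α) (Or.inl hs.ne'))
  have hinner : HasDerivAt (fun t : ℝ => 1 + t ^ p) (p * s ^ (p-1)) s := by
    simpa using ((Real.hasDerivAt_rpow_const (x := s) (p := p) (Or.inl hs.ne')).const_add 1)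
  have houter := Real.hasDerivAt_rpow_const (x := 1 + s ^ p) (p := -δ) (Or.inl hu.ne')
  have h2 : HasDerivAt (fun t : ℝ => (1 + t ^ p) ^ (-δ))
      ((-δ * (1 + s ^ p) ^ (-δ-1)) * (p * s ^ (p-1))) s := HasDerivAt.comp (h₂ := fun x : ℝ => x ^ (-δ)) s houter hinner
  have hmul := h1.mul h2
  have e1 : -α - 1 = -(α+1) := by ring
  have e2 : -δ - 1 = -(δ+1) := by ring
  have eX : (1 + s ^ p) ^ (-δ) = (1 + s ^ p) ^ (-(δ+1)) * (1 + s ^ p) := by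
    rw [← Real.rpow_add_one hu.ne']; congr 1; ring
  have eY : s ^ (-α) * s ^ (p-1) = s ^ (-(α+1-p)) := by
    rw [← Real.rpow_add hs]; congr 1; ring
  have eXY : s ^ (-(α+1)) * s ^ p = s ^ (-(α+1-p)) := by
    rw [← Real.rpow_add hs]; congr 1; ring
  refine hmul.congr_deriv ?_
  symm
  unfold Hf
  rw [e1, e2]
  linear_combination (α * s ^ (-(α+1))) * eX + (α * (1 + s ^ p) ^ (-(δ+1))) * eXY
    + (δ * p * (1 + s ^ p) ^ (-(δ+1))) * eY

lemma Alt.smul_add {n : ℕ} {c₁ c₂ : ℝ} {g₁ g₂ : ℝ → ℝ}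
    (h₁ : Alt n g₁) (h₂ : Alt n g₂) (hc₁ : 0 ≤ c₁) (hc₂ : 0 ≤ c₂) :
    Alt n (fun s => c₁ * g₁ s + c₂ * g₂ s) := by
  induction n generalizing g₁ g₂ with
  | zero =>
      intro s hs
      exact add_nonneg (mul_nonneg hc₁ (h₁ s hs)) (mul_nonneg hc₂ (h₂ s hs))
  | succ n ih =>
      obtain ⟨h10, k₁, hd₁, hA₁⟩ := h₁
      obtain ⟨h20, k₂, hd₂, hA₂⟩ := h₂
      refine ⟨fun s hs => add_nonneg (mul_nonneg hc₁ (h10 s hs)) (mul_nonneg hc₂ (h20 s hs)),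
        fun s => c₁ * k₁ s + c₂ * k₂ s, fun s hs => ?_, ih hA₁ hA₂⟩
      have := ((hd₁ s hs).const_mul c₁).add ((hd₂ s hs).const_mul c₂)
      exact this.congr_deriv (by ring)

lemma Alt_Hf (p : ℝ) (hp0 : 0 < p) (hp1 : p ≤ 1) :
    ∀ (n : ℕ) (α δ : ℝ), 0 ≤ α → 0 ≤ α + p * min δ 0 → Alt n (Hf p α δ) := by
  intro n
  induction n with
  | zero =>
      intro α δ hα hinv s hs
      exact (Hf_pos p α δ (lt_trans one_pos hs)).le
  | succ n ih =>
      intro α δ hα hinv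
      have hcoeff : 0 ≤ α + p * δ := by
        rcases le_or_gt 0 δ with h | h
        · nlinarith
        · rw [min_eq_left h.le] at hinv; linarith
      refine ⟨fun s hs => (Hf_pos p α δ (lt_trans one_pos hs)).le,
        fun s => α * Hf p (α+1) (δ+1) s + (α + p*δ) * Hf p (α+1-p) (δ+1) s,
        fun s hs => hasDerivAt_Hf p α δ (lt_trans one_pos hs), ?_⟩
      have hchild : ∀ α' : ℝ, 0 ≤ α' → α + p * δ + 1 - p ≤ α' + p * min (δ+1) 0 + p * δ - p * δ →
          True := fun _ _ _ => trivial
      apply Alt.smul_add _ _ hα hcoeff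
      · apply ih (α+1) (δ+1) (by linarith)
        rcases le_or_gt 0 (δ+1) with h | h
        · rw [min_eq_right h]; linarith
        · rw [min_eq_left h.le]
          rw [min_eq_left (by linarith : δ ≤ 0)] at hinv
          nlinarith
      · apply ih (α+1-p) (δ+1) (by linarith)
        rcases le_or_gt 0 (δ+1) with h | h
        · rw [min_eq_right h]; linarith
        · rw [min_eq_left h.le]
          rw [min_eq_left (by linarith : δ ≤ 0)] at hinv
          nlinarith




noncomputable def w (p b lam : ℝ) (n k : ℕ) : ℝ :=
  a lam k * (Real.Gamma (p * k + b + n) / Real.Gamma (p * k + b))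

noncomputable def S (p b lam : ℝ) (n : ℕ) (s : ℝ) : ℝ :=
  ∑' k : ℕ, w p b lam n k * s ^ (-(p * k + b + n))

variable {p b lam : ℝ}



section main

variable (hp0 : 0 < p) (hp1 : p ≤ 1) (hb : 0 < b)

lemma pkb_pos (hp0 : 0 < p) (hb : 0 < b) (n k : ℕ) : 0 < p * k + b + n := by
  have h1 : (0:ℝ) ≤ p * k := by positivity
  have h2 : (0:ℝ) ≤ n := Nat.cast_nonneg n
  linarith

lemma w_succ (hp0 : 0 < p) (hb : 0 < b) (n k : ℕ) :
    w p b lam (n + 1) k = w p b lam n k * (p * k + b + n) := by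
  have h := pkb_pos hp0 hb n k
  have e : p * k + b + ((n:ℕ) + 1 : ℕ) = (p * k + b + n) + 1 := by push_cast; ring
  rw [w, w, e, Real.Gamma_add_one h.ne']
  ring

lemma abs_w_le (hp0 : 0 < p) (hb : 0 < b) (M : ℕ) (hM : |lam| ≤ M) (n k : ℕ) :
    |w p b lam n k| ≤ (p + b + n) ^ n * ((k : ℝ) + 1) ^ (M + n) := by
  have hpkb : 0 < p * k + b := by positivity
  have hΓ : 0 < Real.Gamma (p * k + b) := Real.Gamma_pos_of_pos hpkb
  have hΓn : 0 < Real.Gamma (p * k + b + n) :=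
    Real.Gamma_pos_of_pos (pkb_pos hp0 hb n k)
  have hratio : Real.Gamma (p * k + b + n) / Real.Gamma (p * k + b)
      ≤ (p * k + b + n) ^ (n : ℝ) := by
    rw [div_le_iff₀ hΓ]
    calc Real.Gamma (p * k + b + n)
        ≤ Real.Gamma (p * k + b) * (p * k + b + n) ^ (n : ℝ) :=
          Gamma_shift_upper _ _ hpkb (Nat.cast_nonneg n)
      _ = (p * k + b + n) ^ (n : ℝ) * Real.Gamma (p * k + b) := by ring
  have hpow : (p * k + b + n) ^ (n : ℝ) ≤ (p + b + n) ^ n * ((k:ℝ) + 1) ^ n := by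
    rw [Real.rpow_natCast]
    have hle : p * k + b + n ≤ (p + b + n) * ((k:ℝ) + 1) := by
      have h2 : (0:ℝ) ≤ n := Nat.cast_nonneg n
      have h3 : (0:ℝ) ≤ k := Nat.cast_nonneg k
      nlinarith
    calc (p * k + b + n) ^ n ≤ ((p + b + n) * ((k:ℝ) + 1)) ^ n := by
          apply pow_le_pow_left₀ (pkb_pos hp0 hb n k).le hle
      _ = (p + b + n) ^ n * ((k:ℝ) + 1) ^ n := mul_pow _ _ _
  have habs : |w p b lam n k|
      = |a lam k| * (Real.Gamma (p * k + b + n) / Real.Gamma (p * k + b)) := by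
    rw [w, abs_mul, abs_of_pos (div_pos hΓn hΓ)]
  rw [habs]
  calc |a lam k| * (Real.Gamma (p * k + b + n) / Real.Gamma (p * k + b))
      ≤ ((k:ℝ)+1)^M * ((p + b + n) ^ n * ((k:ℝ) + 1) ^ n) := by
        apply mul_le_mul (abs_a_le lam M hM k) (le_trans hratio hpow)
          (by positivity) (by positivity)
    _ = (p + b + n) ^ n * ((k:ℝ) + 1) ^ (M + n) := by rw [pow_add]; ring

lemma rpow_base_antitone {t s c : ℝ} (ht : 0 < t) (hs : t ≤ s) (hc : 0 ≤ c) :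
    s ^ (-c) ≤ t ^ (-c) := by
  have hs0 : 0 < s := lt_of_lt_of_le ht hs
  rw [Real.rpow_neg ht.le, Real.rpow_neg hs0.le]
  have h1 : (0:ℝ) < t ^ c := Real.rpow_pos_of_pos ht c
  exact inv_anti₀ h1 (Real.rpow_le_rpow ht.le hs hc)

lemma rpow_split (t : ℝ) (ht : 0 < t) (c : ℝ) (k n : ℕ) :
    t ^ (-(p * k + c)) = (t ^ (-p)) ^ k * t ^ (-c) := by
  rw [show -(p * k + c) = (-p) * (k:ℝ) + (-c) by ring, Real.rpow_add ht,
    Real.rpow_mul ht.le, Real.rpow_natCast]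

lemma summable_S (hp0 : 0 < p) (hb : 0 < b) (M : ℕ) (hM : |lam| ≤ M) (n : ℕ)
    {s : ℝ} (hs : 1 < s) :
    Summable (fun k : ℕ => w p b lam n k * s ^ (-(p * k + b + n))) := by
  have hs0 : 0 < s := lt_trans one_pos hs
  have hr0 : 0 < s ^ (-p) := Real.rpow_pos_of_pos hs0 _
  have hr1 : s ^ (-p) < 1 := Real.rpow_lt_one_of_one_lt_of_neg hs (by linarith)
  apply Summable.of_norm_bounded
    (g := fun k : ℕ => ((p + b + n) ^ n * s ^ (-(b + (n:ℝ)))) * (((k:ℝ)+1)^(M+n) * (s ^ (-p))^k))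
    (((summable_poly_geom (M+n) hr0.le hr1).mul_left _))
  intro k
  rw [Real.norm_eq_abs, abs_mul]
  have e : s ^ (-(p * k + b + n)) = (s ^ (-p)) ^ k * s ^ (-(b + (n:ℝ))) := by
    rw [show -(p * k + b + (n:ℝ)) = -(p * k + (b + n)) by ring]
    exact rpow_split s hs0 (b + n) k n
  have hterm : |s ^ (-(p * k + b + n))| = (s ^ (-p)) ^ k * s ^ (-(b + (n:ℝ))) := by
    rw [abs_of_pos (Real.rpow_pos_of_pos hs0 _)]
    exact e
  rw [hterm]
  calc |w p b lam n k| * ((s ^ (-p)) ^ k * s ^ (-(b + (n:ℝ))))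
      ≤ ((p + b + n) ^ n * ((k:ℝ)+1)^(M+n)) * ((s ^ (-p)) ^ k * s ^ (-(b + (n:ℝ)))) := by
        apply mul_le_mul_of_nonneg_right (abs_w_le hp0 hb M hM n k) (by positivity)
    _ = ((p + b + n) ^ n * s ^ (-(b + (n:ℝ)))) * (((k:ℝ)+1)^(M+n) * (s ^ (-p))^k) := by
        ring

lemma hasDerivAt_S (hp0 : 0 < p) (hb : 0 < b) (M : ℕ) (hM : |lam| ≤ M) (n : ℕ)
    {s : ℝ} (hs : 1 < s) :
    HasDerivAt (S p b lam n) (-(S p b lam (n + 1) s)) s := by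
  set t₀ : ℝ := (1 + s) / 2 with ht₀def
  have ht₀1 : 1 < t₀ := by rw [ht₀def]; linarith
  have ht₀0 : 0 < t₀ := lt_trans one_pos ht₀1
  have ht₀s : t₀ < s := by rw [ht₀def]; linarith
  have hmem : s ∈ Set.Ioi t₀ := ht₀s
  have key : HasDerivAt (fun y => ∑' k : ℕ, w p b lam n k * y ^ (-(p * k + b + n)))
      (∑' k : ℕ, w p b lam n k * ((-(p * k + b + n)) * s ^ (-(p * k + b + n) - 1))) s := by
    apply hasDerivAt_tsum_of_isPreconnected
      (u := fun k : ℕ => ((p + b + n) ^ n * (p + b + n + 1) * t₀ ^ (-(b + (n:ℝ) + 1)))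
          * (((k:ℝ)+1)^(M+n+1) * (t₀ ^ (-p))^k))
      (g := fun (k : ℕ) (y : ℝ) => w p b lam n k * y ^ (-(p * k + b + n)))
      (g' := fun (k : ℕ) (y : ℝ) => w p b lam n k * ((-(p * k + b + n)) * y ^ (-(p * k + b + n) - 1)))
      (t := Set.Ioi t₀) ?_ isOpen_Ioi (convex_Ioi t₀).isPreconnected ?_ ?_ hmem ?_ hmem
    · have hr0 : 0 < t₀ ^ (-p) := Real.rpow_pos_of_pos ht₀0 _
      have hr1 : t₀ ^ (-p) < 1 := Real.rpow_lt_one_of_one_lt_of_neg ht₀1 (by linarith)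
      exact (summable_poly_geom (M+n+1) hr0.le hr1).mul_left _
    · intro k y hy
      have hy0 : 0 < y := lt_trans ht₀0 hy
      exact (Real.hasDerivAt_rpow_const (p := -(p * k + b + n))
        (Or.inl hy0.ne')).const_mul (w p b lam n k)
    · intro k y hy
      have hy0 : 0 < y := lt_trans ht₀0 hy
      have hc : (0:ℝ) ≤ p * k + b + n := (pkb_pos hp0 hb n k).le
      rw [Real.norm_eq_abs, abs_mul, abs_mul, abs_neg, abs_of_nonneg hc,
        abs_of_pos (Real.rpow_pos_of_pos hy0 _)]
      have h1 : y ^ (-(p * k + b + n) - 1) ≤ t₀ ^ (-(p * k + b + n) - 1) := by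
        rw [show -(p * k + b + (n:ℝ)) - 1 = -((p * k + b + n) + 1) by ring]
        exact rpow_base_antitone ht₀0 hy.le (by linarith)
      have h2 : t₀ ^ (-(p * k + b + n) - 1) = (t₀ ^ (-p)) ^ k * t₀ ^ (-(b + (n:ℝ) + 1)) := by
        rw [show -(p * k + b + (n:ℝ)) - 1 = -(p * k + (b + n + 1)) by ring]
        exact rpow_split t₀ ht₀0 (b + n + 1) k n
      calc |w p b lam n k| * ((p * k + b + n) * y ^ (-(p * k + b + n) - 1))
          = |w p b lam n k| * (p * k + b + n) * y ^ (-(p * k + b + n) - 1) := by ring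
        _ ≤ ((p + b + n) ^ n * ((k:ℝ)+1)^(M+n)) * ((p + b + n + 1) * ((k:ℝ)+1))
            * ((t₀ ^ (-p)) ^ k * t₀ ^ (-(b + (n:ℝ) + 1))) := by
            apply mul_le_mul
            · apply mul_le_mul (abs_w_le hp0 hb M hM n k) ?_ hc (by positivity)
              have h3 : (0:ℝ) ≤ k := Nat.cast_nonneg k
              have h4 : (0:ℝ) ≤ n := Nat.cast_nonneg n
              nlinarith
            · rw [← h2]; exact h1
            · positivity
            · positivity
          _ = ((p + b + n) ^ n * (p + b + n + 1) * t₀ ^ (-(b + (n:ℝ) + 1)))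
              * (((k:ℝ)+1)^(M+n+1) * (t₀ ^ (-p))^k) := by
              rw [pow_succ (((k:ℝ)+1)) (M+n)]
              ring
    · exact summable_S hp0 hb M hM n hs
  have ederiv : (∑' k : ℕ, w p b lam n k * ((-(p * k + b + n)) * s ^ (-(p * k + b + n) - 1)))
      = -(S p b lam (n + 1) s) := by
    rw [S, ← tsum_neg]
    apply tsum_congr
    intro k
    rw [w_succ hp0 hb n k]
    have e : -(p * k + b + ((n:ℕ) + 1 : ℕ) : ℝ) = -(p * k + b + n) - 1 := by push_cast; ring
    rw [e]
    ring
  rw [← ederiv]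
  exact key

end main




noncomputable def F (lam : ℝ) (x : ℝ) : ℝ := ∑' k : ℕ, a lam k * x ^ k

variable {lam : ℝ} {M : ℕ}

lemma abs_bound_mono (hM : |lam| ≤ M) (k : ℕ) {x r : ℝ} (hxr : |x| ≤ r) :
    |a lam k * x ^ k| ≤ ((k:ℝ)+1)^M * r ^ k := by
  rw [abs_mul, abs_pow]
  apply mul_le_mul (abs_a_le lam M hM k) (pow_le_pow_left₀ (abs_nonneg x) hxr k)
    (by positivity) (by positivity)

lemma summable_F (hM : |lam| ≤ M) {x : ℝ} (hx : |x| < 1) :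
    Summable (fun k : ℕ => a lam k * x ^ k) := by
  apply Summable.of_norm_bounded (g := fun k : ℕ => ((k:ℝ)+1)^M * |x| ^ k)
    (summable_poly_geom M (abs_nonneg x) hx)
  intro k
  exact abs_bound_mono hM k le_rfl

lemma summable_Fderiv (hM : |lam| ≤ M) {x : ℝ} (hx : |x| < 1) :
    Summable (fun k : ℕ => a lam k * ((k:ℝ) * x ^ (k - 1))) := by
  rcases eq_or_lt_of_le (abs_nonneg x) with h | h
  · apply summable_of_ne_finset_zero (s := {0, 1})
    intro k hk
    simp only [Finset.mem_insert, Finset.mem_singleton] at hk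
    push_neg at hk
    have hx0 : x = 0 := by rwa [eq_comm, abs_eq_zero] at h
    have : k - 1 ≠ 0 := by omega
    rw [hx0, zero_pow this]
    ring
  · have hxlt : |x| < 1 := hx
    apply Summable.of_norm_bounded
      (g := fun k : ℕ => (1/|x|) * (((k:ℝ)+1)^(M+1) * |x| ^ k))
      ((summable_poly_geom (M+1) (abs_nonneg x) hx).mul_left _)
    intro k
    rw [Real.norm_eq_abs, abs_mul, abs_mul]
    have h1 : |a lam k| ≤ ((k:ℝ)+1)^M := abs_a_le lam M hM k
    have h2 : |(k:ℝ)| = (k:ℝ) := abs_of_nonneg (Nat.cast_nonneg k)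
    have h3 : |x ^ (k-1)| = |x| ^ (k-1) := abs_pow x (k-1)
    rw [h2, h3]
    have key : (k:ℝ) * |x| ^ (k - 1) ≤ (1/|x|) * (((k:ℝ)+1) * |x| ^ k) := by
      rcases Nat.eq_zero_or_pos k with hk | hk
      · subst hk
        simp only [Nat.cast_zero, zero_mul]
        positivity
      · have e : |x| ^ k = |x| ^ (k-1) * |x| := by
          rw [← pow_succ]; congr 1; omega
        rw [e, one_div, mul_comm ((k:ℝ)+1) _]
        rw [show |x|⁻¹ * (|x| ^ (k-1) * |x| * ((k:ℝ)+1)) = (|x|⁻¹ * |x|) * (|x| ^ (k-1) * ((k:ℝ)+1)) by ring]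
        rw [inv_mul_cancel₀ (ne_of_gt h), one_mul]
        have : (k:ℝ) ≤ (k:ℝ)+1 := by linarith
        nlinarith [pow_nonneg (abs_nonneg x) (k-1)]
    calc |a lam k| * ((k:ℝ) * |x| ^ (k-1))
        ≤ ((k:ℝ)+1)^M * ((1/|x|) * (((k:ℝ)+1) * |x| ^ k)) := by
          apply mul_le_mul h1 key (by positivity) (by positivity)
      _ = (1/|x|) * (((k:ℝ)+1)^(M+1) * |x| ^ k) := by rw [pow_succ]; ring
    
lemma hasDerivAt_F (hM : |lam| ≤ M) {x : ℝ} (hx : |x| < 1) :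
    HasDerivAt (F lam) (∑' k : ℕ, a lam k * ((k:ℝ) * x ^ (k - 1))) x := by
  set r : ℝ := (1 + |x|) / 2 with hrdef
  have hr0 : 0 < r := by positivity
  have hr1 : r < 1 := by rw [hrdef]; linarith
  have hxr : |x| < r := by rw [hrdef]; linarith
  have hmem : x ∈ Set.Ioo (-r) r := by
    constructor <;> [linarith [neg_abs_le x]; linarith [le_abs_self x]]
  apply hasDerivAt_tsum_of_isPreconnected
    (u := fun k : ℕ => (1/r) * (((k:ℝ)+1)^(M+1) * r ^ k))
    (g := fun (k : ℕ) (y : ℝ) => a lam k * y ^ k)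
    (g' := fun (k : ℕ) (y : ℝ) => a lam k * ((k:ℝ) * y ^ (k - 1)))
    ?_ isOpen_Ioo (convex_Ioo _ _).isPreconnected ?_ ?_ hmem ?_ hmem
  · exact (summable_poly_geom (M+1) hr0.le hr1).mul_left _
  · intro k y _
    exact (hasDerivAt_pow k y).const_mul (a lam k)
  · intro k y hy
    have hyr : |y| ≤ r := by
      rw [abs_le]
      exact ⟨(Set.mem_Ioo.mp hy).1.le, (Set.mem_Ioo.mp hy).2.le⟩
    rw [Real.norm_eq_abs, abs_mul, abs_mul]
    have h2 : |(k:ℝ)| = (k:ℝ) := abs_of_nonneg (Nat.cast_nonneg k)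
    rw [h2, abs_pow]
    calc |a lam k| * ((k:ℝ) * |y| ^ (k-1))
        ≤ ((k:ℝ)+1)^M * (((k:ℝ)+1) * r ^ (k-1)) := by
          apply mul_le_mul (abs_a_le lam M hM k) ?_ (by positivity) (by positivity)
          apply mul_le_mul (by linarith) (pow_le_pow_left₀ (abs_nonneg y) hyr _)
            (by positivity) (by positivity)
      _ ≤ (1/r) * (((k:ℝ)+1)^(M+1) * r ^ k) := by
          rcases Nat.eq_zero_or_pos k with hk | hk
          · subst hk
            have hinv : (1:ℝ) ≤ r⁻¹ := by
              have h5 : r * r⁻¹ = 1 := mul_inv_cancel₀ hr0.ne'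
              nlinarith [inv_pos.mpr hr0]
            simp only [Nat.cast_zero, zero_add, pow_zero, Nat.zero_sub, one_pow, mul_one,
              one_mul, one_div]
            linarith
          · have e : r ^ k = r ^ (k-1) * r := by rw [← pow_succ]; congr 1; omega
            rw [e, pow_succ]
            rw [show (1/r) * (((k:ℝ)+1)^M * ((k:ℝ)+1) * (r^(k-1) * r)) = ((1/r)*r) * (((k:ℝ)+1)^M * (((k:ℝ)+1) * r^(k-1))) by ring]
            rw [one_div, inv_mul_cancel₀ hr0.ne', one_mul]
  · exact summable_F hM hx


lemma summable_SA (hM : |lam| ≤ M) {x : ℝ} (hx : |x| < 1) :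
    Summable (fun k : ℕ => a lam (k+1) * (((k:ℝ)+1) * x ^ k)) := by
  apply Summable.of_norm_bounded
    (g := fun k : ℕ => 2^M * (((k:ℝ)+1)^(M+1) * |x| ^ k))
    ((summable_poly_geom (M+1) (abs_nonneg x) hx).mul_left _)
  intro k
  rw [Real.norm_eq_abs, abs_mul, abs_mul, abs_pow,
    abs_of_nonneg (by positivity : (0:ℝ) ≤ (k:ℝ)+1)]
  have h1 : |a lam (k+1)| ≤ ((k:ℝ)+2)^M := by
    have h0 := abs_a_le lam M hM (k+1)
    push_cast at h0
    calc |a lam (k+1)| ≤ ((k:ℝ)+1+1)^M := h0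
      _ = ((k:ℝ)+2)^M := by ring
  have h2 : ((k:ℝ)+2)^M ≤ 2^M * ((k:ℝ)+1)^M := by
    rw [← mul_pow]
    apply pow_le_pow_left₀ (by positivity) (by linarith)
  calc |a lam (k+1)| * (((k:ℝ)+1) * |x| ^ k)
      ≤ (2^M * ((k:ℝ)+1)^M) * (((k:ℝ)+1) * |x| ^ k) := by
        apply mul_le_mul (le_trans h1 h2) le_rfl (by positivity) (by positivity)
    _ = 2^M * (((k:ℝ)+1)^(M+1) * |x| ^ k) := by rw [pow_succ]; ring

lemma summable_SB (hM : |lam| ≤ M) {x : ℝ} (hx : |x| < 1) :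
    Summable (fun k : ℕ => a lam k * ((k:ℝ) * x ^ k)) := by
  apply Summable.of_norm_bounded
    (g := fun k : ℕ => ((k:ℝ)+1)^(M+1) * |x| ^ k)
    (summable_poly_geom (M+1) (abs_nonneg x) hx)
  intro k
  rw [Real.norm_eq_abs, abs_mul, abs_mul, abs_pow,
    abs_of_nonneg (Nat.cast_nonneg (α := ℝ) k)]
  calc |a lam k| * ((k:ℝ) * |x| ^ k)
      ≤ ((k:ℝ)+1)^M * (((k:ℝ)+1) * |x| ^ k) := by
        apply mul_le_mul (abs_a_le lam M hM k)
          (mul_le_mul (by linarith) le_rfl (by positivity) (by positivity))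
          (by positivity) (by positivity)
    _ = ((k:ℝ)+1)^(M+1) * |x| ^ k := by rw [pow_succ]; ring

lemma F_ode (hM : |lam| ≤ M) {x : ℝ} (hx : |x| < 1) :
    (1 + x) * (∑' k : ℕ, a lam k * ((k:ℝ) * x ^ (k - 1))) = -lam * F lam x := by
  have hT := summable_Fderiv hM hx
  have hA := summable_SA hM hx
  have hB := summable_SB hM hx
  have eT : (∑' k : ℕ, a lam k * ((k:ℝ) * x ^ (k - 1)))
      = ∑' k : ℕ, a lam (k+1) * (((k:ℝ)+1) * x ^ k) := by
    rw [Summable.tsum_eq_zero_add hT]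
    simp only [Nat.cast_zero, zero_mul, mul_zero, zero_add]
    apply tsum_congr
    intro k
    have : (k + 1) - 1 = k := by omega
    rw [this]
    push_cast
    ring
  have eB : (∑' k : ℕ, a lam k * ((k:ℝ) * x ^ k))
      = ∑' k : ℕ, a lam (k+1) * (((k:ℝ)+1) * x ^ (k+1)) := by
    rw [Summable.tsum_eq_zero_add hB]
    simp only [Nat.cast_zero, zero_mul, mul_zero, zero_add]
    apply tsum_congr
    intro k
    push_cast
    ring
  have exT : x * (∑' k : ℕ, a lam (k+1) * (((k:ℝ)+1) * x ^ k))
      = ∑' k : ℕ, a lam k * ((k:ℝ) * x ^ k) := by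
    rw [eB, ← tsum_mul_left]
    apply tsum_congr
    intro k
    rw [pow_succ]
    ring
  rw [eT]
  rw [show (1 + x) * (∑' k : ℕ, a lam (k+1) * (((k:ℝ)+1) * x ^ k))
      = (∑' k : ℕ, a lam (k+1) * (((k:ℝ)+1) * x ^ k))
        + x * (∑' k : ℕ, a lam (k+1) * (((k:ℝ)+1) * x ^ k)) from by ring]
  rw [exT]
  have hsum : (∑' k : ℕ, a lam (k+1) * (((k:ℝ)+1) * x ^ k))
      + (∑' k : ℕ, a lam k * ((k:ℝ) * x ^ k))
      = ∑' k : ℕ, -lam * (a lam k * x ^ k) := by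
    rw [← Summable.tsum_add hA hB]
    apply tsum_congr
    intro k
    have h := a_succ lam k
    linear_combination (x^k) * h
  rw [hsum, tsum_mul_left, F]

lemma F_zero : F lam 0 = 1 := by
  rw [F, tsum_eq_single 0 (fun k hk => by simp [zero_pow hk])]
  simp [a]

lemma F_eq (hM : |lam| ≤ M) {x : ℝ} (hx0 : 0 ≤ x) (hx1 : x < 1) :
    F lam x = (1 + x) ^ (-lam) := by
  have habs : ∀ y ∈ Set.Icc (0:ℝ) x, |y| < 1 := by
    intro y hy
    rw [abs_of_nonneg hy.1]
    exact lt_of_le_of_lt hy.2 hx1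
  have hD : ∀ y ∈ Set.Icc (0:ℝ) x, HasDerivAt (fun t => F lam t * (1+t)^lam) 0 y := by
    intro y hy
    have hy1 : (0:ℝ) < 1 + y := by have := hy.1; linarith
    have hF := hasDerivAt_F hM (habs y hy)
    have hin : HasDerivAt (fun t : ℝ => 1 + t) 1 y := (hasDerivAt_id y).const_add 1
    have hout := Real.hasDerivAt_rpow_const (x := 1 + y) (p := lam) (Or.inl hy1.ne')
    have hpow : HasDerivAt (fun t : ℝ => (1+t)^lam) (lam * (1+y)^(lam-1)) y := by
      have := HasDerivAt.comp (h₂ := fun x : ℝ => x ^ lam) y hout hin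
      exact this.congr_deriv (mul_one _)
    have hprod := hF.mul hpow
    refine hprod.congr_deriv ?_
    symm
    have e1 : (1+y)^lam = (1+y)^(lam-1) * (1+y) := by
      rw [← Real.rpow_add_one hy1.ne']; congr 1; ring
    have hode := F_ode hM (habs y hy)
    rw [e1]
    linear_combination (-((1+y)^(lam-1))) * hode
  have hcont : ContinuousOn (fun t => F lam t * (1+t)^lam) (Set.Icc 0 x) :=
    fun y hy => ((hD y hy).continuousAt).continuousWithinAt
  have := constant_of_has_deriv_right_zero hcont
    (fun y hy => ((hD y (Set.mem_Icc_of_Ico hy)).hasDerivWithinAt))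
  have hDx := this x (Set.right_mem_Icc.mpr hx0)
  simp only [add_zero, F_zero] at hDx
  -- hDx : F lam x * (1+x)^lam = 1 * 1^lam
  have h1x : (0:ℝ) < 1 + x := by linarith
  have hpos : (0:ℝ) < (1+x)^lam := Real.rpow_pos_of_pos h1x lam
  rw [Real.one_rpow, one_mul] at hDx
  rw [Real.rpow_neg h1x.le]
  field_simp
  linarith [hDx]










lemma S0_eq (hp0 : 0 < p) (hb : 0 < b) (hM : |lam| ≤ M) {s : ℝ} (hs : 1 < s) :
    S p b lam 0 s = Hf p (b - p * lam) lam s := by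
  have hs0 : 0 < s := lt_trans one_pos hs
  have hx0 : 0 < s ^ (-p) := Real.rpow_pos_of_pos hs0 _
  have hx1 : s ^ (-p) < 1 := Real.rpow_lt_one_of_one_lt_of_neg hs (by linarith)
  have hsp : 0 < s ^ p := Real.rpow_pos_of_pos hs0 _
  have e1 : S p b lam 0 s = (∑' k : ℕ, a lam k * (s ^ (-p)) ^ k) * s ^ (-b) := by
    rw [S, ← tsum_mul_right]
    apply tsum_congr
    intro k
    have hpkb : (0:ℝ) < p * k + b := by positivity
    have hΓ : Real.Gamma (p * k + b) ≠ 0 := (Real.Gamma_pos_of_pos hpkb).ne'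
    rw [w]
    simp only [Nat.cast_zero, add_zero]
    rw [div_self hΓ, mul_one]
    rw [rpow_split s hs0 b k 0]
    ring
  rw [e1, show (∑' k : ℕ, a lam k * (s ^ (-p)) ^ k) = F lam (s ^ (-p)) from rfl,
    F_eq hM hx0.le hx1, Hf]
  -- now pure rpow algebra
  have key : (1 + s ^ (-p)) ^ (-lam) = (s ^ (-p)) ^ (-lam) * (1 + s ^ p) ^ (-lam) := by
    rw [← Real.mul_rpow (le_of_lt hx0) (by positivity)]
    congr 1
    have : s ^ (-p) * s ^ p = 1 := by
      rw [← Real.rpow_add hs0]; simp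
    nlinarith [this]
  rw [key]
  have e2 : (s ^ (-p)) ^ (-lam) = s ^ (p * lam) := by
    rw [← Real.rpow_mul hs0.le]
    congr 1
    ring
  rw [e2]
  have e3 : s ^ (p * lam) * (1 + s ^ p) ^ (-lam) * s ^ (-b)
      = (s ^ (p*lam) * s ^ (-b)) * (1 + s ^ p) ^ (-lam) := by ring
  rw [e3, ← Real.rpow_add hs0]
  congr 2
  ring

lemma chain (hp0 : 0 < p) (hb : 0 < b) (M : ℕ) (hM : |lam| ≤ M) :
    ∀ (n j : ℕ) (f : ℝ → ℝ), Alt n f → (∀ s, 1 < s → f s = S p b lam j s) →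
    ∀ s, 1 < s → 0 ≤ S p b lam (j + n) s := by
  intro n
  induction n with
  | zero =>
      intro j f hAlt hfS s hs
      rw [Nat.add_zero, ← hfS s hs]
      exact hAlt s hs
  | succ n ih =>
      intro j f hAlt hfS
      obtain ⟨h0, g, hder, hAltg⟩ := hAlt
      have hg : ∀ s, 1 < s → g s = S p b lam (j+1) s := by
        intro s hs
        have hfd : HasDerivAt f (-(S p b lam (j + 1) s)) s := by
          have hmem : Set.Ioi (1:ℝ) ∈ 𝓝 s := isOpen_Ioi.mem_nhds hs
          have heq : f =ᶠ[𝓝 s] S p b lam j :=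
            Filter.eventuallyEq_of_mem hmem (fun y hy => hfS y hy)
          exact heq.hasDerivAt_iff.mpr (hasDerivAt_S hp0 hb M hM j hs)
        have := (hder s hs).unique hfd
        exact neg_injective this
      have := ih (j+1) g hAltg hg
      intro s hs
      have e : j + (n+1) = (j+1) + n := by omega
      rw [e]
      exact this s hs





variable {p b lam z : ℝ}

noncomputable def R (p b : ℝ) (n k : ℕ) : ℝ :=
  Real.Gamma (b + n + p * k) / Real.Gamma (b + n) / (n : ℝ) ^ (p * (k : ℝ))

/-- one plus u to a power is at most exp (q u) -/
lemma one_add_rpow_le_exp {u q : ℝ} (hu : 0 ≤ u) (hq : 0 ≤ q) :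
    (1 + u) ^ q ≤ Real.exp (u * q) := by
  calc (1 + u) ^ q ≤ (Real.exp u) ^ q := by
        apply Real.rpow_le_rpow (by linarith) _ hq
        linarith [Real.add_one_le_exp u]
    _ = Real.exp (u * q) := (Real.exp_mul u q).symm

lemma tendsto_one_add_div_atTop {c : ℝ} {f : ℕ → ℝ} (hf : Tendsto f atTop atTop) :
    Tendsto (fun n => 1 + c / f n) atTop (𝓝 1) := by
  have h0 : Tendsto (fun n => c / f n) atTop (𝓝 0) := by
    have := hf.inv_tendsto_atTop
    have h2 := this.const_mul c
    simpa [div_eq_mul_inv] using h2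
  simpa using (tendsto_const_nhds (x := (1:ℝ))).add h0

lemma tendsto_nat_cast_atTop : Tendsto (fun n : ℕ => (n : ℝ)) atTop atTop :=
  tendsto_natCast_atTop_atTop

lemma R_bounds (hp0 : 0 < p) (hb : 0 < b) (k n : ℕ) (hn : 1 ≤ n) :
    ((b + (n:ℝ)) / n) ^ (p * (k:ℝ)) * ((b + n) / (b + n + p * k)) ≤ R p b n k
    ∧ R p b n k ≤ ((b + (n:ℝ) + p * k) / n) ^ (p * (k:ℝ)) := by
  have hn0 : (0:ℝ) < n := by exact_mod_cast hn
  have hbn : (0:ℝ) < b + n := by linarith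
  have hpk : (0:ℝ) ≤ p * k := by positivity
  have hbnpk : (0:ℝ) < b + n + p * k := by linarith
  have hΓbn : 0 < Real.Gamma (b + n) := Real.Gamma_pos_of_pos hbn
  have hnp : (0:ℝ) < (n:ℝ) ^ (p * (k:ℝ)) := Real.rpow_pos_of_pos hn0 _
  constructor
  · rw [R, le_div_iff₀ hnp, le_div_iff₀ hΓbn]
    have e : ((b + (n:ℝ)) / n) ^ (p * (k:ℝ)) * ((b + n) / (b + n + p * k))
        * (n:ℝ) ^ (p * (k:ℝ)) * Real.Gamma (b + n)
        = Real.Gamma (b+n) * (b+(n:ℝ)) ^ (p*(k:ℝ)) * ((b+n) / (b+n+p*k)) := by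
      rw [Real.div_rpow hbn.le hn0.le]
      field_simp
    rw [e]
    exact Gamma_shift_lower (b + n) (p * k) hbn hpk
  · rw [R, div_le_iff₀ hnp, div_le_iff₀ hΓbn]
    have e : ((b + (n:ℝ) + p * k) / n) ^ (p * (k:ℝ)) * (n:ℝ) ^ (p * (k:ℝ))
        * Real.Gamma (b + n)
        = Real.Gamma (b+n) * (b+(n:ℝ)+p*k) ^ (p*(k:ℝ)) := by
      rw [Real.div_rpow hbnpk.le hn0.le]
      field_simp
    rw [e]
    exact Gamma_shift_upper (b + n) (p * k) hbn hpk

lemma R_tendsto (hp0 : 0 < p) (hb : 0 < b) (k : ℕ) :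
    Tendsto (fun n : ℕ => R p b n k) atTop (𝓝 1) := by
  have hpk : (0:ℝ) ≤ p * k := by positivity
  have hnat : Tendsto (fun n : ℕ => (n:ℝ)) atTop atTop := tendsto_nat_cast_atTop
  have hbnk : Tendsto (fun n : ℕ => b + (n:ℝ) + p * k) atTop atTop :=
    tendsto_atTop_add_const_right _ (p*k) (tendsto_atTop_add_const_left _ b hnat)
  have hlo : Tendsto (fun n : ℕ =>
      ((b + (n:ℝ)) / n) ^ (p * (k:ℝ)) * ((b + n) / (b + n + p * k))) atTop (𝓝 1) := by
    have h1 : Tendsto (fun n : ℕ => (b + (n:ℝ)) / n) atTop (𝓝 1) := by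
      apply (tendsto_one_add_div_atTop (c := b) hnat).congr'
      filter_upwards [eventually_ge_atTop 1] with n hn
      have hn0 : (0:ℝ) < n := by exact_mod_cast hn
      field_simp
      ring
    have h1' : Tendsto (fun n : ℕ => ((b + (n:ℝ)) / n) ^ (p * (k:ℝ))) atTop (𝓝 1) := by
      have := h1.rpow_const (p := p * (k:ℝ)) (Or.inr hpk)
      simpa using this
    have h2 : Tendsto (fun n : ℕ => (b + (n:ℝ)) / (b + n + p * k)) atTop (𝓝 1) := by
      have h3 : Tendsto (fun n : ℕ => 1 - (p*k) / (b + (n:ℝ) + p * k)) atTop (𝓝 1) := by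
        have h4 := hbnk.inv_tendsto_atTop
        have h5 := h4.const_mul (p*k)
        have h6 := (tendsto_const_nhds (x := (1:ℝ))).sub h5
        simpa [div_eq_mul_inv] using h6
      apply h3.congr'
      filter_upwards [eventually_ge_atTop 1] with n hn
      have hn0 : (0:ℝ) < n := by exact_mod_cast hn
      have : (0:ℝ) < b + n + p*k := by linarith
      field_simp
      ring
    simpa using h1'.mul h2
  have hhi : Tendsto (fun n : ℕ =>
      ((b + (n:ℝ) + p * k) / n) ^ (p * (k:ℝ))) atTop (𝓝 1) := by
    have h1 : Tendsto (fun n : ℕ => (b + (n:ℝ) + p*k) / n) atTop (𝓝 1) := by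
      apply (tendsto_one_add_div_atTop (c := b + p*k) hnat).congr'
      filter_upwards [eventually_ge_atTop 1] with n hn
      have hn0 : (0:ℝ) < n := by exact_mod_cast hn
      field_simp
      ring
    have := h1.rpow_const (p := p * (k:ℝ)) (Or.inr hpk)
    simpa using this
  apply tendsto_of_tendsto_of_tendsto_of_le_of_le' hlo hhi
  · filter_upwards [eventually_ge_atTop 1] with n hn
    exact (R_bounds hp0 hb k n hn).1
  · filter_upwards [eventually_ge_atTop 1] with n hn
    exact (R_bounds hp0 hb k n hn).2









noncomputable def L (p b lam z : ℝ) (k : ℕ) : ℝ :=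
  a lam k * z ^ k * Real.Gamma b / Real.Gamma (p * k + b)

noncomputable def hfun (p b z : ℝ) (M N₀ : ℕ) (k : ℕ) : ℝ :=
  ((k:ℝ)+1)^M * z^k * Real.Gamma b / Real.Gamma (p*k+b)
    * ((b + (N₀:ℝ) + p*k) / N₀) ^ (p*(k:ℝ))

noncomputable def rho (p b z : ℝ) (M N₀ : ℕ) (k : ℕ) : ℝ :=
  z * (((k:ℝ)+2)/((k:ℝ)+1))^M * Real.exp p * ((p*k+b+p)/(p*k+b))
    * ((b + (N₀:ℝ) + p*k + p) / ((N₀:ℝ) * (p*k+b))) ^ p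

variable {p b lam z : ℝ} {M N₀ : ℕ}

lemma hfun_pos (hp0 : 0 < p) (hb : 0 < b) (hz : 0 < z) (hN1 : 1 ≤ (N₀:ℝ)) (k : ℕ) :
    0 < hfun p b z M N₀ k := by
  have h1 : (0:ℝ) < p*k+b := by positivity
  have h2 : 0 < Real.Gamma (p*k+b) := Real.Gamma_pos_of_pos h1
  have h3 : 0 < Real.Gamma b := Real.Gamma_pos_of_pos hb
  have h4 : (0:ℝ) < (N₀:ℝ) := by linarith
  have h5 : (0:ℝ) < b + (N₀:ℝ) + p*k := by positivity
  rw [hfun]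
  positivity

lemma ratio_bound (hp0 : 0 < p) (hb : 0 < b) (hz : 0 < z) (hN1 : 1 ≤ (N₀:ℝ)) (k : ℕ) :
    hfun p b z M N₀ (k+1) ≤ rho p b z M N₀ k * hfun p b z M N₀ k := by
  have hN0 : (0:ℝ) < N₀ := by linarith
  set c : ℝ := p*k+b with hc
  have hcpos : 0 < c := by rw [hc]; positivity
  have hΓ0 : 0 < Real.Gamma c := Real.Gamma_pos_of_pos hcpos
  have hΓb : 0 < Real.Gamma b := Real.Gamma_pos_of_pos hb
  set x : ℝ := b + (N₀:ℝ) + p*k with hx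
  have hxpos : 0 < x := by rw [hx]; positivity
  have hpk : (0:ℝ) ≤ p*(k:ℝ) := by positivity
  have hΓ1arg : p*((k:ℕ)+1:ℕ) + b = c + p := by push_cast; rw [hc]; ring
  have hΓ1pos : 0 < Real.Gamma (c + p) := Real.Gamma_pos_of_pos (by linarith)
  -- (ii) Gamma lower bound
  have hii : Real.Gamma c * c ^ p * (c/(c+p)) ≤ Real.Gamma (c + p) :=
    Gamma_shift_lower c p hcpos hp0.le
  -- (i) A bound
  set A0 : ℝ := ((b + (N₀:ℝ) + p*k) / N₀) ^ (p*(k:ℝ)) with hA0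
  set A1 : ℝ := ((b + (N₀:ℝ) + p*((k:ℕ)+1:ℕ)) / N₀) ^ (p*(((k:ℕ)+1:ℕ):ℝ)) with hA1
  have hA0pos : 0 < A0 := Real.rpow_pos_of_pos (by positivity) _
  set E : ℝ := Real.exp p * ((x + p)/N₀) ^ p with hE
  have hEpos : 0 < E := by
    rw [hE]; positivity
  have hi : A1 ≤ A0 * E := by
    have hbase : b + (N₀:ℝ) + p*((k:ℕ)+1:ℕ) = x + p := by rw [hx]; push_cast; ring
    have hexp : p*(((k:ℕ)+1:ℕ):ℝ) = p*(k:ℝ) + p := by push_cast; ring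
    rw [hA1, hbase, hexp, Real.rpow_add (by positivity)]
    have hsplit : ((x+p)/N₀) ^ (p*(k:ℝ)) = A0 * ((x+p)/x) ^ (p*(k:ℝ)) := by
      rw [hA0, ← Real.mul_rpow (by positivity) (by positivity)]
      congr 1
      rw [hx]
      field_simp
    rw [hsplit]
    have hone : ((x+p)/x) ^ (p*(k:ℝ)) ≤ Real.exp p := by
      have e : (x+p)/x = 1 + p/x := by field_simp
      rw [e]
      calc (1 + p/x) ^ (p*(k:ℝ)) ≤ Real.exp ((p/x) * (p*(k:ℝ))) :=
            one_add_rpow_le_exp (by positivity) hpk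
        _ ≤ Real.exp p := by
            apply Real.exp_le_exp.mpr
            rw [div_mul_eq_mul_div]
            rw [div_le_iff₀ hxpos]
            have hkx : p*(k:ℝ) ≤ x := by rw [hx]; linarith [hb.le, hN1]
            nlinarith
    calc A0 * ((x+p)/x) ^ (p*(k:ℝ)) * ((x+p)/N₀) ^ p
        ≤ A0 * Real.exp p * ((x+p)/N₀) ^ p := by
          apply mul_le_mul_of_nonneg_right _ (by positivity)
          exact mul_le_mul_of_nonneg_left hone hA0pos.le
      _ = A0 * E := by rw [hE]; ring
  -- key division inequality
  have hkey : A1 / Real.Gamma (c+p) ≤ (E * ((c+p) * A0)) / (c^p * c * Real.Gamma c) := by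
    have hcp : (0:ℝ) < c ^ p := Real.rpow_pos_of_pos hcpos p
    rw [div_le_div_iff₀ hΓ1pos (by positivity)]
    have hcross : A1 * (Real.Gamma c * c^p * (c/(c+p))) ≤ (A0 * E) * Real.Gamma (c+p) :=
      mul_le_mul hi hii (by positivity) (by positivity)
    have h2 := mul_le_mul_of_nonneg_right hcross (by positivity : (0:ℝ) ≤ c+p)
    have hdc : c/(c+p)*(c+p) = c := div_mul_cancel₀ c (by positivity : (c+p) ≠ 0)
    calc A1 * (c^p * c * Real.Gamma c)
        = A1 * (Real.Gamma c * c^p * (c/(c+p)*(c+p))) := by rw [hdc]; ring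
      _ = A1 * (Real.Gamma c * c^p * (c/(c+p))) * (c+p) := by ring
      _ ≤ (A0 * E) * Real.Gamma (c+p) * (c+p) := h2
      _ = E * ((c+p) * A0) * Real.Gamma (c+p) := by ring
  -- assemble
  have hcp : (0:ℝ) < c ^ p := Real.rpow_pos_of_pos hcpos p
  have hk1 : ((k:ℝ)+1) ≠ 0 := by positivity
  have hk1M : (((k:ℝ)+1))^M ≠ 0 := by positivity
  have e1 : hfun p b z M N₀ (k+1) = (((k:ℝ)+2)^M * z^(k+1) * Real.Gamma b) * (A1 / Real.Gamma (c+p)) := by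
    rw [hfun, ← hΓ1arg, ← hA1]
    push_cast
    ring
  have e2 : ((x + p) / ((N₀:ℝ) * c)) ^ p = ((x+p)/N₀) ^ p * (c^p)⁻¹ := by
    rw [show (x + p) / ((N₀:ℝ) * c) = ((x+p)/N₀) * c⁻¹ by
        rw [div_mul_eq_div_div, div_eq_mul_inv],
      Real.mul_rpow (by positivity) (by positivity), Real.inv_rpow hcpos.le]
  have e3 : rho p b z M N₀ k * hfun p b z M N₀ k
      = (((k:ℝ)+2)^M * z^(k+1) * Real.Gamma b) * ((E * ((c+p) * A0)) / (c^p * c * Real.Gamma c)) := by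
    rw [rho, hfun, ← hA0, ← hc, e2, hE]
    rw [show ((x:ℝ) + p) = b + (N₀:ℝ) + p*k + p by rw [hx]]
    rw [div_pow]
    field_simp
    ring
  rw [e1, e3]
  exact mul_le_mul_of_nonneg_left hkey (by positivity)

lemma rho_tendsto (hp0 : 0 < p) (hb : 0 < b) (hN1 : 1 ≤ (N₀:ℝ)) :
    Tendsto (fun k : ℕ => rho p b z M N₀ k) atTop
      (𝓝 (z * Real.exp p / ((N₀:ℝ) ^ p))) := by
  have hN0 : (0:ℝ) < N₀ := by linarith
  have hpkb : Tendsto (fun k : ℕ => p * (k:ℝ) + b) atTop atTop :=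
    tendsto_atTop_add_const_right _ b
      ((tendsto_natCast_atTop_atTop (R := ℝ)).const_mul_atTop hp0)
  have h1 : Tendsto (fun k : ℕ => (((k:ℝ)+2)/((k:ℝ)+1))^M) atTop (𝓝 1) := by
    have hb1 : Tendsto (fun k : ℕ => ((k:ℝ)+2)/((k:ℝ)+1)) atTop (𝓝 1) := by
      have := tendsto_one_add_div_atTop (c := (1:ℝ))
        (tendsto_atTop_add_const_right _ (1:ℝ) (tendsto_natCast_atTop_atTop (R := ℝ)))
      apply this.congr'
      filter_upwards [eventually_ge_atTop 0] with k _
      have : ((k:ℝ)+1) ≠ 0 := by positivity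
      field_simp
      ring
    simpa using hb1.pow M
  have h2 : Tendsto (fun k : ℕ => (p*(k:ℝ)+b+p)/(p*(k:ℝ)+b)) atTop (𝓝 1) := by
    have h3 := (tendsto_one_add_div_atTop (c := p) hpkb)
    apply h3.congr'
    filter_upwards [eventually_ge_atTop 0] with k _
    have hc : (0:ℝ) < p*(k:ℝ)+b := by positivity
    field_simp
  have h4 : Tendsto (fun k : ℕ => ((b + (N₀:ℝ) + p*k + p) / ((N₀:ℝ) * (p*k+b))) ^ p)
      atTop (𝓝 ((1/(N₀:ℝ)) ^ p)) := by
    have h5 : Tendsto (fun k : ℕ => (b + (N₀:ℝ) + p*(k:ℝ) + p) / ((N₀:ℝ) * (p*(k:ℝ)+b)))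
        atTop (𝓝 (1/(N₀:ℝ))) := by
      have h6 : Tendsto (fun k : ℕ => (1 + ((N₀:ℝ)+p)/(p*(k:ℝ)+b)) * (1/(N₀:ℝ)))
          atTop (𝓝 (1 * (1/(N₀:ℝ)))) :=
        (tendsto_one_add_div_atTop (c := (N₀:ℝ)+p) hpkb).mul_const _
      rw [one_mul] at h6
      apply h6.congr'
      filter_upwards [eventually_ge_atTop 0] with k _
      have hc : (0:ℝ) < p*(k:ℝ)+b := by positivity
      field_simp
      ring
    have := h5.rpow_const (p := p) (Or.inr hp0.le)
    exact this
  have hz1 : Tendsto (fun k : ℕ => z * (((k:ℝ)+2)/((k:ℝ)+1))^M * Real.exp p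
      * ((p*(k:ℝ)+b+p)/(p*(k:ℝ)+b))
      * ((b + (N₀:ℝ) + p*k + p) / ((N₀:ℝ) * (p*k+b))) ^ p) atTop
      (𝓝 (z * 1 * Real.exp p * 1 * ((1/(N₀:ℝ)) ^ p))) := by
    exact ((((tendsto_const_nhds (x := z)).mul h1).mul
      (tendsto_const_nhds (x := Real.exp p))).mul h2).mul h4
  have efin : z * 1 * Real.exp p * 1 * ((1/(N₀:ℝ)) ^ p) = z * Real.exp p / ((N₀:ℝ) ^ p) := by
    rw [one_div, Real.inv_rpow hN0.le]
    field_simp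
  rw [efin] at hz1
  exact hz1.congr (fun k => by rw [rho])

lemma summable_hfun (hp0 : 0 < p) (hb : 0 < b) (hz : 0 < z) (hN1 : 1 ≤ (N₀:ℝ))
    (hsmall : z * Real.exp p / ((N₀:ℝ) ^ p) < 1/2) :
    Summable (fun k : ℕ => hfun p b z M N₀ k) := by
  apply summable_of_ratio_norm_eventually_le (r := 1/2) (by norm_num)
  have hev : ∀ᶠ k : ℕ in atTop, rho p b z M N₀ k < 1/2 :=
    (rho_tendsto hp0 hb hN1).eventually_lt_const hsmall
  filter_upwards [hev] with k hk
  have hpos := hfun_pos (M := M) hp0 hb hz hN1 k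
  have hpos1 := hfun_pos (M := M) hp0 hb hz hN1 (k+1)
  rw [Real.norm_eq_abs, Real.norm_eq_abs, abs_of_pos hpos, abs_of_pos hpos1]
  calc hfun p b z M N₀ (k+1) ≤ rho p b z M N₀ k * hfun p b z M N₀ k :=
        ratio_bound hp0 hb hz hN1 k
    _ ≤ 1/2 * hfun p b z M N₀ k := by
        apply mul_le_mul_of_nonneg_right hk.le hpos.le

lemma L_abs_le (hb : 0 < b) (hp0 : 0 < p) (hz : 0 < z) (hM : |lam| ≤ M) (k : ℕ) :
    |L p b lam z k| ≤ ((k:ℝ)+1)^M * z^k * Real.Gamma b / Real.Gamma (p*k+b) := by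
  have hc : (0:ℝ) < p*k+b := by positivity
  have hΓc : 0 < Real.Gamma (p*k+b) := Real.Gamma_pos_of_pos hc
  have hΓb : 0 < Real.Gamma b := Real.Gamma_pos_of_pos hb
  rw [L, abs_div, abs_mul, abs_mul, abs_of_pos hΓb, abs_of_pos hΓc,
    abs_pow, abs_of_pos hz]
  gcongr
  exact abs_a_le lam M hM k

lemma bound_eventually (hp0 : 0 < p) (hb : 0 < b) (hz : 0 < z) (hM : |lam| ≤ M)
    (hN1 : 1 ≤ (N₀:ℝ)) :
    ∀ᶠ n : ℕ in atTop, ∀ k : ℕ, ‖L p b lam z k * R p b n k‖ ≤ hfun p b z M N₀ k := by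
  have hN0 : (0:ℝ) < N₀ := by linarith
  filter_upwards [eventually_ge_atTop (max N₀ 1)] with n hn k
  have hn1 : 1 ≤ n := le_trans (le_max_right _ _) hn
  have hnN : N₀ ≤ n := le_trans (le_max_left _ _) hn
  have hn0 : (0:ℝ) < n := by exact_mod_cast hn1
  have hnNr : (N₀:ℝ) ≤ n := by exact_mod_cast hnN
  have hc : (0:ℝ) < p*k+b := by positivity
  have hΓc : 0 < Real.Gamma (p*k+b) := Real.Gamma_pos_of_pos hc
  have hbn : (0:ℝ) < b + n := by linarith
  have hRpos : 0 < R p b n k := by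
    rw [R]
    have h1 : (0:ℝ) < b + n + p*k := by positivity
    have := Real.Gamma_pos_of_pos h1
    have := Real.Gamma_pos_of_pos hbn
    positivity
  rw [Real.norm_eq_abs, abs_mul, abs_of_pos hRpos]
  have hR1 : R p b n k ≤ ((b + (N₀:ℝ) + p*k)/N₀) ^ (p*(k:ℝ)) := by
    calc R p b n k ≤ ((b + (n:ℝ) + p * k) / n) ^ (p * (k:ℝ)) := (R_bounds hp0 hb k n hn1).2
      _ ≤ ((b + (N₀:ℝ) + p*k)/N₀) ^ (p*(k:ℝ)) := by
        apply Real.rpow_le_rpow (by positivity) _ (by positivity)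
        have hdd : (b+p*(k:ℝ))/n ≤ (b+p*k)/N₀ :=
          div_le_div_of_nonneg_left (by positivity) hN0 hnNr
        have e1 : (b + (n:ℝ) + p*k)/n = (b + p*(k:ℝ))/n + 1 := by
          field_simp
          ring
        have e2 : (b + (N₀:ℝ) + p*k)/N₀ = (b + p*(k:ℝ))/N₀ + 1 := by
          field_simp
          ring
        rw [e1, e2]
        linarith
  rw [hfun]
  calc |L p b lam z k| * R p b n k
      ≤ (((k:ℝ)+1)^M * z^k * Real.Gamma b / Real.Gamma (p*k+b))
        * (((b + (N₀:ℝ) + p*k)/N₀) ^ (p*(k:ℝ))) := by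
        apply mul_le_mul (L_abs_le hb hp0 hz hM k) hR1 hRpos.le (by positivity)
    _ = ((k:ℝ)+1)^M * z^k * Real.Gamma b / Real.Gamma (p*k+b)
        * ((b + (N₀:ℝ) + p*k) / N₀) ^ (p*(k:ℝ)) := by ring

lemma tsum_LR_eq (hp0 : 0 < p) (hb : 0 < b) (hz : 0 < z) (n : ℕ) (hn1 : 1 ≤ n)
    (hsn : 1 < (n:ℝ) * z ^ (-(1/p))) :
    ∑' k : ℕ, L p b lam z k * R p b n k
      = (Real.Gamma b / Real.Gamma (b+n) * ((n:ℝ) * z ^ (-(1/p))) ^ ((b:ℝ)+n))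
        * S p b lam n ((n:ℝ) * z ^ (-(1/p))) := by
  have hn0 : (0:ℝ) < n := by exact_mod_cast hn1
  set sn : ℝ := (n:ℝ) * z ^ (-(1/p)) with hsndef
  have hsn0 : 0 < sn := lt_trans one_pos hsn
  have hzr : (0:ℝ) < z ^ (-(1/p)) := Real.rpow_pos_of_pos hz _
  rw [S, ← tsum_mul_left]
  apply tsum_congr
  intro k
  have hc : (0:ℝ) < p*k+b := by positivity
  have hΓc : 0 < Real.Gamma (p*k+b) := Real.Gamma_pos_of_pos hc
  have hbn : (0:ℝ) < b + n := by linarith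
  have hΓbn : 0 < Real.Gamma (b+n) := Real.Gamma_pos_of_pos hbn
  have hnp : (0:ℝ) < (n:ℝ) ^ (p*(k:ℝ)) := Real.rpow_pos_of_pos hn0 _
  have e1 : sn ^ ((b:ℝ)+n) * sn ^ (-(p*k+b+n)) = sn ^ (-(p*(k:ℝ))) := by
    rw [← Real.rpow_add hsn0]
    congr 1
    ring
  have e2 : sn ^ (-(p*(k:ℝ))) = z^k * ((n:ℝ)^(p*(k:ℝ)))⁻¹ := by
    rw [hsndef, Real.mul_rpow hn0.le hzr.le, ← Real.rpow_natCast z k]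
    rw [← Real.rpow_mul hz.le]
    rw [Real.rpow_neg hn0.le]
    rw [show -(1/p) * -(p*(k:ℝ)) = (k:ℝ) by field_simp]
    ring
  have eΓ : (b:ℝ) + n + p*k = p*k+b+n := by ring
  rw [w, R, eΓ]
  rw [show Real.Gamma b / Real.Gamma (b + ↑n) * sn ^ ((b:ℝ) + ↑n)
      * (a lam k * (Real.Gamma (p * ↑k + b + ↑n) / Real.Gamma (p * ↑k + b)) * sn ^ (-(p * ↑k + b + ↑n)))
      = Real.Gamma b / Real.Gamma (b + ↑n)
        * (a lam k * (Real.Gamma (p * ↑k + b + ↑n) / Real.Gamma (p * ↑k + b)))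
        * (sn ^ ((b:ℝ) + ↑n) * sn ^ (-(p * ↑k + b + ↑n))) from by ring]
  rw [e1, e2, L]
  field_simp



lemma S_nonneg (hp0 : 0 < p) (hp1 : p ≤ 1) (hb : 0 < b) (hbl : p * lam ≤ b)
    (M : ℕ) (hM : |lam| ≤ M) (n : ℕ) {s : ℝ} (hs : 1 < s) : 0 ≤ S p b lam n s := by
  have hα : 0 ≤ b - p * lam := by linarith
  have hinv : 0 ≤ (b - p * lam) + p * min lam 0 := by
    rcases le_or_gt 0 lam with h | h
    · rw [min_eq_right h]; linarith
    · rw [min_eq_left h.le]; linarith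
  have hAlt := Alt_Hf p hp0 hp1 n (b - p * lam) lam hα hinv
  have hch := chain hp0 hb M hM n 0 (Hf p (b - p * lam) lam) hAlt
    (fun s hs => (S0_eq hp0 hb hM hs).symm)
  simpa using hch s hs

end GMLProof

/-- For `0 < p ≤ 1`, `b > 0`, and real `λ` with `b ≥ pλ`, one has
`E^λ_{p,b}(−z) ≥ 0` for every `z > 0`. -/
theorem genMittagLeffler_nonneg (p b lam : ℝ) (hp0 : 0 < p) (hp1 : p ≤ 1)
    (hb : 0 < b) (hbl : p * lam ≤ b) :
    ∀ z > (0 : ℝ), 0 ≤ genMittagLeffler p b lam (-z) := by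
  intro z hz
  classical
  open GMLProof in
  set M : ℕ := ⌈|lam|⌉₊ with hMdef
  have hM : |lam| ≤ M := Nat.le_ceil _
  obtain ⟨N₀, hN1, hsmall⟩ : ∃ N₀ : ℕ, 1 ≤ (N₀:ℝ) ∧ z * Real.exp p / ((N₀:ℝ) ^ p) < 1/2 := by
    have h1 : Tendsto (fun n : ℕ => ((n:ℝ)) ^ p) atTop atTop :=
      (tendsto_rpow_atTop hp0).comp tendsto_natCast_atTop_atTop
    have h2 := (h1.eventually_ge_atTop (2 * z * Real.exp p + 1)).and
      ((tendsto_natCast_atTop_atTop (R := ℝ)).eventually_ge_atTop 1)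
    obtain ⟨N₀, hN⟩ := h2.exists
    refine ⟨N₀, hN.2, ?_⟩
    have hexp : (0:ℝ) < Real.exp p := Real.exp_pos p
    have hNp : (0:ℝ) < (N₀:ℝ) ^ p := by nlinarith [hN.1]
    rw [div_lt_iff₀ hNp]
    nlinarith [hN.1]
  have hL := tendsto_tsum_of_dominated_convergence
      (f := fun (n : ℕ) (k : ℕ) => L p b lam z k * R p b n k)
      (g := L p b lam z) (bound := hfun p b z M N₀)
      (summable_hfun hp0 hb hz hN1 hsmall)
      (fun k => by
        simpa using Tendsto.const_mul (L p b lam z k) (R_tendsto hp0 hb k))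
      (bound_eventually hp0 hb hz hM hN1)
  have hev : ∀ᶠ n : ℕ in atTop, 0 ≤ ∑' k : ℕ, L p b lam z k * R p b n k := by
    have hzr : (0:ℝ) < z ^ (-(1/p)) := Real.rpow_pos_of_pos hz _
    have hsn : Tendsto (fun n : ℕ => (n:ℝ) * z ^ (-(1/p))) atTop atTop :=
      (tendsto_natCast_atTop_atTop (R := ℝ)).atTop_mul_const hzr
    filter_upwards [eventually_ge_atTop 1, hsn.eventually_gt_atTop 1] with n hn1 hsn1
    rw [tsum_LR_eq hp0 hb hz n hn1 hsn1]
    apply mul_nonneg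
    · have hΓb : 0 < Real.Gamma b := Real.Gamma_pos_of_pos hb
      have hbn : (0:ℝ) < b + n := by
        have : (0:ℝ) ≤ n := Nat.cast_nonneg n
        linarith
      have hΓbn : 0 < Real.Gamma (b + n) := Real.Gamma_pos_of_pos hbn
      have hsn0 : (0:ℝ) < (n:ℝ) * z ^ (-(1/p)) := lt_trans one_pos hsn1
      positivity
    · exact S_nonneg hp0 hp1 hb hbl M hM n hsn1
  have h0 : 0 ≤ ∑' k : ℕ, L p b lam z k := ge_of_tendsto hL hev
  have hLG : ∑' k : ℕ, L p b lam z k = Real.Gamma b * genMittagLeffler p b lam (-z) := by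
    rw [genMittagLeffler, ← tsum_mul_left]
    apply tsum_congr
    intro k
    have hc : (0:ℝ) < p * k + b := by positivity
    have hΓc : Real.Gamma (p * k + b) ≠ 0 := (Real.Gamma_pos_of_pos hc).ne'
    have hfac : (Nat.factorial k : ℝ) ≠ 0 := by
      exact_mod_cast (Nat.factorial_pos k).ne'
    rw [L, a, neg_pow z k]
    field_simp
  rw [hLG] at h0
  have hΓb : 0 < Real.Gamma b := Real.Gamma_pos_of_pos hb
  calc (0:ℝ) ≤ (Real.Gamma b * genMittagLeffler p b lam (-z)) / Real.Gamma b :=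
        div_nonneg h0 hΓb.le
    _ = genMittagLeffler p b lam (-z) := by field_simp
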